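/- (Theorem 3, joint certification for rNN) Let X be a metric space, c ≥ 2, r : ℝ, D a multiset over X × Fin c, e a natural number, and let (x_1,y_1),…,(x_m,y_m) be testing examples with x_i : X, y_i ∈ Fin c, whose rNN predicted labels a_i := rNN_r(D,x_i) are pairwise distinct. For each i let s_l^{(i)} := s_l(N_r(D,x_i)), let b_i be the largest label among those l ≠ a_i attaining the maximum of s_l^{(i)} over l ≠ a_i, and define c_i := 𝟙(a_i = y_i) · max(s_{a_i}^{(i)} − s_{b_i}^{(i)} − e + 𝟙(b_i < a_i), 0) ∈ ℕ. Assume the examples are ordered so that c_1 ≥ c_2 ≥ … ≥ c_m. Let w be the least natural number w' with 1 ≤ w' ≤ m+1 such that Σ_{i : w' ≤ i ≤ m} c_i ≤ e. Then for every multiset D* over X × Fin c with S(D,D*) ≤ e, the number of indices i with rNN_r(D*,x_i) = y_i is at least w − 1. -/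

import Mathlib

/-- Poisoning size between two multisets: `max (card A) (card B) - card (A ∩ B)`. -/
noncomputable def pSize {α : Type*} (A B : Multiset α) : ℕ :=
  haveI := Classical.decEq α
  max A.card B.card - (A ∩ B).card

/-- Number of votes for label `l` in a multiset of labeled examples (counted with
multiplicity). -/
def votes {X : Type*} {c : ℕ} (T : Multiset (X × Fin c)) (l : Fin c) : ℕ :=
  T.countP (fun p => p.2 = l)

/-- Tie-broken majority label: the largest label (in the order of `Fin c`) among the
labels attaining the maximum vote count. -/
noncomputable def majLabel {X : Type*} {c : ℕ} (hc : 0 < c) (T : Multiset (X × Fin c)) :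
    Fin c :=
  (Finset.univ.filter (fun l : Fin c => ∀ l', votes T l' ≤ votes T l)).max'
    (by
      haveI : NeZero c := ⟨hc.ne'⟩
      obtain ⟨b, -, hb⟩ := Finset.exists_max_image (Finset.univ : Finset (Fin c)) (votes T)
        Finset.univ_nonempty
      exact ⟨b, Finset.mem_filter.mpr ⟨Finset.mem_univ b, fun l' => hb l' (Finset.mem_univ l')⟩⟩)

/-- The largest label, among those `l ≠ a`, attaining the maximum of `s l` over `l ≠ a`. -/
noncomputable def secondLabel {c : ℕ} (hc : 2 ≤ c) (s : Fin c → ℕ) (a : Fin c) : Fin c :=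
  (Finset.univ.filter (fun l : Fin c => l ≠ a ∧ ∀ l', l' ≠ a → s l' ≤ s l)).max'
    (by
      have h1 : 1 < Fintype.card (Fin c) := by rw [Fintype.card_fin]; omega
      obtain ⟨l0, hl0⟩ := Fintype.exists_ne_of_one_lt_card h1 a
      have hne : (Finset.univ.filter (fun l : Fin c => l ≠ a)).Nonempty :=
        ⟨l0, Finset.mem_filter.mpr ⟨Finset.mem_univ _, hl0⟩⟩
      obtain ⟨b, hb, hbmax⟩ := Finset.exists_max_image _ s hne
      refine ⟨b, Finset.mem_filter.mpr ⟨Finset.mem_univ _, (Finset.mem_filter.mp hb).2, ?_⟩⟩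
      intro l' hl'
      exact hbmax l' (Finset.mem_filter.mpr ⟨Finset.mem_univ _, hl'⟩))

/-- rNN neighbor multiset: training examples within distance `r` of the test input `x`. -/
noncomputable def Nr {X : Type*} [MetricSpace X] {c : ℕ} (r : ℝ)
    (D : Multiset (X × Fin c)) (x : X) : Multiset (X × Fin c) :=
  haveI : DecidablePred (fun p : X × Fin c => dist p.1 x ≤ r) := Classical.decPred _
  D.filter (fun p => dist p.1 x ≤ r)

/-- rNN prediction: tie-broken majority label among the rNN neighbors. -/
noncomputable def rNNpred {X : Type*} [MetricSpace X] {c : ℕ} (hc : 0 < c) (r : ℝ)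
    (D : Multiset (X × Fin c)) (x : X) : Fin c :=
  majLabel hc (Nr r D x)

section AuxLemmas

set_option linter.unusedSectionVars false
set_option linter.unusedVariables false

variable {X : Type*} [MetricSpace X] {c : ℕ}

lemma majLabel_spec (hc0 : 0 < c) (T : Multiset (X × Fin c)) (l : Fin c) :
    votes T l ≤ votes T (majLabel hc0 T) := by
  have h : majLabel hc0 T ∈
      Finset.univ.filter (fun l : Fin c => ∀ l', votes T l' ≤ votes T l) :=
    Finset.max'_mem _ _
  exact (Finset.mem_filter.mp h).2 l

lemma le_majLabel (hc0 : 0 < c) (T : Multiset (X × Fin c)) (l : Fin c)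
    (h : votes T (majLabel hc0 T) ≤ votes T l) : l ≤ majLabel hc0 T := by
  apply Finset.le_max'
  exact Finset.mem_filter.mpr ⟨Finset.mem_univ _,
    fun l' => le_trans (majLabel_spec hc0 T l') h⟩

lemma secondLabel_ne (hc : 2 ≤ c) (s : Fin c → ℕ) (a : Fin c) :
    secondLabel hc s a ≠ a := by
  have h : secondLabel hc s a ∈
      Finset.univ.filter (fun l : Fin c => l ≠ a ∧ ∀ l', l' ≠ a → s l' ≤ s l) :=
    Finset.max'_mem _ _
  exact (Finset.mem_filter.mp h).2.1

lemma secondLabel_spec (hc : 2 ≤ c) (s : Fin c → ℕ) (a l : Fin c) (hl : l ≠ a) :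
    s l ≤ s (secondLabel hc s a) := by
  have h : secondLabel hc s a ∈
      Finset.univ.filter (fun l : Fin c => l ≠ a ∧ ∀ l', l' ≠ a → s l' ≤ s l) :=
    Finset.max'_mem _ _
  exact (Finset.mem_filter.mp h).2.2 l hl

lemma le_secondLabel (hc : 2 ≤ c) (s : Fin c → ℕ) (a l : Fin c) (hl : l ≠ a)
    (h : s (secondLabel hc s a) ≤ s l) : l ≤ secondLabel hc s a := by
  apply Finset.le_max'
  exact Finset.mem_filter.mpr ⟨Finset.mem_univ _, hl,
    fun l' hl' => le_trans (secondLabel_spec hc s a l' hl') h⟩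

lemma votes_add (r : ℝ) (M M' : Multiset (X × Fin c)) (x : X) (l : Fin c) :
    votes (Nr r (M + M') x) l = votes (Nr r M x) l + votes (Nr r M' x) l := by
  simp [votes, Nr, Multiset.filter_add]

lemma votes_Nr_le_countP (r : ℝ) (M : Multiset (X × Fin c)) (x : X) (l : Fin c) :
    votes (Nr r M x) l ≤ M.countP (fun p => p.2 = l) :=
  Multiset.countP_le_of_le _ (Multiset.filter_le _ _)

lemma votes_le_card (T : Multiset (X × Fin c)) (l : Fin c) : votes T l ≤ T.card :=
  Multiset.countP_le_card _ _

lemma flip_cost (hc : 2 ≤ c) (r : ℝ) (Cm Edel Eadd : Multiset (X × Fin c)) (x : X)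
    (a b : Fin c)
    (ha : a = majLabel (lt_of_lt_of_le two_pos hc) (Nr r (Cm + Edel) x))
    (hb : b = secondLabel hc (fun l => votes (Nr r (Cm + Edel) x) l) a)
    (hflip : majLabel (lt_of_lt_of_le two_pos hc) (Nr r (Cm + Eadd) x) ≠ a) :
    (votes (Nr r (Cm + Edel) x) a : ℤ) - votes (Nr r (Cm + Edel) x) b
      + (if b < a then 1 else 0) ≤ (Edel.countP (fun p => p.2 = a) : ℤ) + Eadd.card := by
  have h0 : 0 < c := lt_of_lt_of_le two_pos hc
  set N := Nr r (Cm + Edel) x with hN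
  set N' := Nr r (Cm + Eadd) x with hN'
  set a' := majLabel h0 N' with ha'
  have haa' : a' ≠ a := hflip
  have i1 : votes N' a + (if a' < a then 1 else 0) ≤ votes N' a' := by
    by_cases hlt : a' < a
    · simp only [hlt, if_true]
      by_contra hcon
      push_neg at hcon
      have : votes N' a' ≤ votes N' a := by omega
      exact absurd (le_majLabel h0 N' a this) (not_le.mpr hlt)
    · simpa [hlt] using majLabel_spec h0 N' a
  have hbne : b ≠ a := by rw [hb]; exact secondLabel_ne hc _ a
  have i2 : votes N a' + (if b < a then 1 else 0) ≤ votes N b + (if a' < a then 1 else 0) := by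
    have hba' : votes N a' ≤ votes N b := by
      rw [hb]; exact secondLabel_spec hc _ a a' haa'
    by_cases hlt : a' < a
    · simp only [hlt, if_true]
      split_ifs <;> omega
    · simp only [hlt, if_false]
      by_cases hblt : b < a
      · simp only [hblt, if_true]
        by_contra hcon
        push_neg at hcon
        have heq : votes N b ≤ votes N a' := by omega
        have h2 : a' ≤ secondLabel hc (fun l => votes N l) a := by
          apply le_secondLabel hc _ a a' haa'
          rw [← hb]; exact heq
        rw [← hb] at h2
        have haa : a < a' := lt_of_le_of_ne (not_lt.mp hlt) (Ne.symm haa')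
        exact absurd (lt_trans hblt haa) (not_lt.mpr h2)
      · simpa [hblt] using hba'
  have hNa : votes N a = votes (Nr r Cm x) a + votes (Nr r Edel x) a := votes_add ..
  have hNb : votes N b = votes (Nr r Cm x) b + votes (Nr r Edel x) b := votes_add ..
  have hNa' : votes N a' = votes (Nr r Cm x) a' + votes (Nr r Edel x) a' := votes_add ..
  have hN'a : votes N' a = votes (Nr r Cm x) a + votes (Nr r Eadd x) a := votes_add ..
  have hN'a' : votes N' a' = votes (Nr r Cm x) a' + votes (Nr r Eadd x) a' := votes_add ..
  have hD1 : votes (Nr r Edel x) a ≤ Edel.countP (fun p => p.2 = a) := votes_Nr_le_countP ..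
  have hA1 : votes (Nr r Eadd x) a' ≤ Eadd.card := (votes_le_card _ _).trans
    (Multiset.card_le_card (Multiset.filter_le _ _))
  have e1 : (if b < a then (1:ℤ) else 0) = ((if b < a then (1:ℕ) else 0) : ℤ) := by
    split_ifs <;> simp
  rw [e1]
  by_cases hba : b < a <;> by_cases ha'a : a' < a <;>
    simp only [hba, ha'a, if_true, if_false] at i1 i2 ⊢ <;> push_cast <;> omega

lemma card_eq_sum_countP {α : Type*} {c : ℕ} (M : Multiset (α × Fin c)) :
    M.card = ∑ l : Fin c, M.countP (fun p => p.2 = l) := by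
  induction M using Multiset.induction with
  | empty => simp
  | cons p s ih =>
      simp only [Multiset.card_cons, Multiset.countP_cons, Finset.sum_add_distrib, ← ih]
      rw [Finset.sum_ite_eq Finset.univ p.2 (fun _ => 1)]
      simp

lemma sum_countP_le {α : Type*} {c m : ℕ} (M : Multiset (α × Fin c)) (a : Fin m → Fin c)
    (hinj : Function.Injective a) (W : Finset (Fin m)) :
    ∑ i ∈ W, M.countP (fun p => p.2 = a i) ≤ M.card := by
  rw [card_eq_sum_countP]
  calc ∑ i ∈ W, M.countP (fun p => p.2 = a i)
      = ∑ l ∈ W.image a, M.countP (fun p => p.2 = l) :=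
        (Finset.sum_image (f := fun l => M.countP (fun p => p.2 = l))
          (fun x _ y _ h => hinj h)).symm
    _ ≤ ∑ l : Fin c, M.countP (fun p => p.2 = l) :=
        Finset.sum_le_sum_of_subset (Finset.subset_univ _)

lemma tail_sum_le {m : ℕ} (cc : Fin m → ℕ) (hmono : Antitone cc) (k : ℕ)
    (W : Finset (Fin m))
    (hcard : (Finset.univ.filter (fun i : Fin m => k ≤ (i : ℕ) + 1)).card ≤ W.card) :
    ∑ i ∈ Finset.univ.filter (fun i : Fin m => k ≤ (i : ℕ) + 1), cc i ≤ ∑ i ∈ W, cc i := by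
  set T := Finset.univ.filter (fun i : Fin m => k ≤ (i : ℕ) + 1) with hT
  have key : ∑ i ∈ T \ W, cc i ≤ ∑ i ∈ W \ T, cc i := by
    rcases Finset.eq_empty_or_nonempty (T \ W) with he | hne
    · simp [he]
    · have hcards : (T \ W).card ≤ (W \ T).card := by
        have h1 := Finset.card_inter_add_card_sdiff T W
        have h2 := Finset.card_inter_add_card_sdiff W T
        rw [Finset.inter_comm] at h2
        omega
      have hWT : (W \ T).Nonempty := by
        rw [← Finset.card_pos] at hne ⊢; omega
      obtain ⟨i0, hi0, hmin⟩ := Finset.exists_min_image (W \ T) cc hWT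
      have hle : ∀ j ∈ T \ W, cc j ≤ cc i0 := by
        intro j hj
        apply hmono
        have hjT : j ∈ T := (Finset.mem_sdiff.mp hj).1
        have hi0T : i0 ∉ T := (Finset.mem_sdiff.mp hi0).2
        rw [hT, Finset.mem_filter] at hjT hi0T
        push_neg at hi0T
        have := hi0T (Finset.mem_univ _)
        have hjk : k ≤ (j : ℕ) + 1 := hjT.2
        rw [Fin.le_def]; omega
      calc ∑ i ∈ T \ W, cc i ≤ (T \ W).card • cc i0 :=
            Finset.sum_le_card_nsmul _ _ _ hle
        _ ≤ (W \ T).card • cc i0 := by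
            simp only [smul_eq_mul]; exact Nat.mul_le_mul_right _ hcards
        _ ≤ ∑ i ∈ W \ T, cc i := Finset.card_nsmul_le_sum _ _ _ hmin
  have h1 := Finset.sum_inter_add_sum_sdiff T W cc
  have h2 := Finset.sum_inter_add_sum_sdiff W T cc
  rw [Finset.inter_comm] at h2
  omega

lemma pSize_eq {α : Type*} [inst : DecidableEq α] (A B : Multiset α) :
    pSize A B = max A.card B.card - (A ∩ B).card := by
  unfold pSize
  rw [Subsingleton.elim (Classical.decEq α) inst]

end AuxLemmas

/-- Theorem 3, joint certification for rNN: for testing examples with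
pairwise-distinct rNN predicted labels, ordered so that
`c_i = 𝟙(a_i = y_i) · max(s_{a_i} − s_{b_i} − e + 𝟙(b_i < a_i), 0)` is nonincreasing,
if `w` is the least `1 ≤ w' ≤ m + 1` with `∑_{i ≥ w'} c_i ≤ e` (1-based indexing), then
any poisoning of size at most `e` leaves at least `w − 1` testing examples correctly
classified. -/
theorem rnn_joint_certification {X : Type*} [MetricSpace X] {c : ℕ} (hc : 2 ≤ c) (r : ℝ)
    (D : Multiset (X × Fin c)) (e : ℕ) {m : ℕ} (xs : Fin m → X) (ys : Fin m → Fin c)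
    (a b : Fin m → Fin c) (cc : Fin m → ℕ)
    (ha : ∀ i, a i = rNNpred (by omega : 0 < c) r D (xs i))
    (hdist : Function.Injective a)
    (hb : ∀ i, b i = secondLabel hc (fun l => votes (Nr r D (xs i)) l) (a i))
    (hcc : ∀ i, (cc i : ℤ) = (if a i = ys i then 1 else 0) *
      max ((votes (Nr r D (xs i)) (a i) : ℤ) - (votes (Nr r D (xs i)) (b i) : ℤ) - (e : ℤ) +
        if b i < a i then 1 else 0) 0)
    (hmono : Antitone cc)
    (w : ℕ)
    (hw : IsLeast {w' : ℕ | 1 ≤ w' ∧ w' ≤ m + 1 ∧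
      ∑ i ∈ Finset.univ.filter (fun i : Fin m => w' ≤ (i : ℕ) + 1), cc i ≤ e} w)
    (Dstar : Multiset (X × Fin c)) (hD : pSize D Dstar ≤ e) :
    w - 1 ≤
      (Finset.univ.filter
        (fun i => rNNpred (by omega : 0 < c) r Dstar (xs i) = ys i)).card := by
  classical
  rcases Nat.lt_or_ge w 2 with hw2 | hw2
  · have hzero : w - 1 = 0 := by omega
    rw [hzero]; exact Nat.zero_le _
  have hw1 : 1 ≤ w := hw.1.1
  have hwm : w ≤ m + 1 := hw.1.2.1
  haveI inst : DecidableEq (X × Fin c) := Classical.decEq _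
  rw [pSize_eq (inst := inst)] at hD
  set Cm := D ∩ Dstar with hCm
  set Edel := D - Cm with hEdel
  set Eadd := Dstar - Cm with hEadd
  have hDeq : Cm + Edel = D := add_tsub_cancel_of_le Multiset.inter_le_left
  have hDseq : Cm + Eadd = Dstar := add_tsub_cancel_of_le Multiset.inter_le_right
  have hcard1 : Cm.card + Edel.card = D.card := by rw [← Multiset.card_add, hDeq]
  have hcard2 : Cm.card + Eadd.card = Dstar.card := by rw [← Multiset.card_add, hDseq]
  have hdelE : Edel.card ≤ e := by
    have := le_max_left D.card Dstar.card
    omega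
  have haddE : Eadd.card ≤ e := by
    have := le_max_right D.card Dstar.card
    omega
  set W := Finset.univ.filter
    (fun i : Fin m => ¬ rNNpred (show (0:ℕ) < c by omega) r Dstar (xs i) = ys i) with hW
  -- each wrongly classified point costs at least cc i deletions with label a i
  have hkey : ∀ i ∈ W, cc i ≤ Edel.countP (fun p => p.2 = a i) := by
    intro i hi
    rw [hW, Finset.mem_filter] at hi
    have hwrong := hi.2
    by_cases hay : a i = ys i
    · have hflip : majLabel (show 0 < c by omega) (Nr r (Cm + Eadd) (xs i)) ≠ a i := by
        rw [hDseq, hay]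
        exact hwrong
      have hai : a i = majLabel (show 0 < c by omega) (Nr r (Cm + Edel) (xs i)) := by
        rw [hDeq]; exact ha i
      have hbi : b i = secondLabel hc (fun l => votes (Nr r (Cm + Edel) (xs i)) l) (a i) := by
        rw [hDeq]; exact hb i
      have hfc := flip_cost hc r Cm Edel Eadd (xs i) (a i) (b i) hai hbi hflip
      rw [hDeq] at hfc
      have hcci := hcc i
      rw [if_pos hay, one_mul] at hcci
      have haddE' : (Eadd.card : ℤ) ≤ (e : ℤ) := by exact_mod_cast haddE
      rcases le_or_gt ((votes (Nr r D (xs i)) (a i) : ℤ) - (votes (Nr r D (xs i)) (b i) : ℤ)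
          - (e : ℤ) + if b i < a i then 1 else 0) 0 with hle | hlt
      · rw [max_eq_right hle] at hcci
        have : cc i = 0 := by exact_mod_cast hcci
        omega
      · rw [max_eq_left hlt.le] at hcci
        have hfin : (cc i : ℤ) ≤ (Edel.countP (fun p => p.2 = a i) : ℤ) := by
          split_ifs at hcci hfc <;> omega
        exact_mod_cast hfin
    · have hcci := hcc i
      rw [if_neg hay, zero_mul] at hcci
      have : cc i = 0 := by exact_mod_cast hcci
      omega
  have hsumW : ∑ i ∈ W, cc i ≤ e :=
    le_trans (Finset.sum_le_sum hkey)
      (le_trans (sum_countP_le Edel a hdist W) hdelE)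
  -- minimality of w : the tail sum from w - 1 exceeds e
  set T := Finset.univ.filter (fun i : Fin m => w - 1 ≤ (i : ℕ) + 1) with hT
  have hTnot : ¬ (∑ i ∈ T, cc i ≤ e) := by
    intro hsum
    have : w ≤ w - 1 := hw.2 ⟨by omega, by omega, hsum⟩
    omega
  have hWT : W.card < T.card := by
    by_contra hge
    push_neg at hge
    have htail := tail_sum_le cc hmono (w - 1) W (by rw [← hT]; exact hge)
    rw [← hT] at htail
    exact hTnot (le_trans htail hsumW)
  -- T has at least m - (w - 2) elements
  have hTdec := Finset.card_filter_add_card_filter_not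
    (s := (Finset.univ : Finset (Fin m))) (p := fun i : Fin m => w - 1 ≤ (i : ℕ) + 1)
  rw [← hT] at hTdec
  have hm1 : 1 ≤ m := by omega
  have hTc : w - 2 ≤ (Finset.univ.filter (fun i : Fin m => ¬ (w - 1 ≤ (i : ℕ) + 1))).card := by
    have hmem : ∀ k ∈ Finset.range (w - 2),
        (fun k : ℕ => (⟨k % m, Nat.mod_lt k (by omega)⟩ : Fin m)) k ∈
          Finset.univ.filter (fun i : Fin m => ¬ (w - 1 ≤ (i : ℕ) + 1)) := by
      intro k hk
      rw [Finset.mem_range] at hk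
      refine Finset.mem_filter.mpr ⟨Finset.mem_univ _, ?_⟩
      show ¬ (w - 1 ≤ k % m + 1)
      rw [Nat.mod_eq_of_lt (by omega)]
      omega
    have hinj : Set.InjOn (fun k : ℕ => (⟨k % m, Nat.mod_lt k (by omega)⟩ : Fin m))
        (Finset.range (w - 2)) := by
      intro k1 h1 k2 h2 hek
      rw [Finset.mem_coe, Finset.mem_range] at h1 h2
      have := congrArg Fin.val hek
      simp only at this
      rwa [Nat.mod_eq_of_lt (by omega), Nat.mod_eq_of_lt (by omega)] at this
    have := Finset.card_le_card_of_injOn _ hmem hinj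
    simpa using this
  have hunivcard : (Finset.univ : Finset (Fin m)).card = m := by simp
  -- conclude
  refine le_trans ?_ (Finset.card_le_card (t :=
    Finset.univ.filter (fun i => rNNpred (by omega : 0 < c) r Dstar (xs i) = ys i))
    (s := Finset.univ \ W) ?_)
  · rw [Finset.card_sdiff_of_subset (Finset.subset_univ W), hunivcard]
    omega
  · intro i hi
    rw [Finset.mem_sdiff, hW, Finset.mem_filter] at hi
    have : rNNpred (show (0:ℕ) < c by omega) r Dstar (xs i) = ys i := by
      by_contra hne
      exact hi.2 ⟨Finset.mem_univ _, hne⟩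
    exact Finset.mem_filter.mpr ⟨Finset.mem_univ _, this⟩
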